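/- Fix n ≥ 1 and work with complex matrices indexed by bitstrings z : Fin (n+1) → Bool. Define the Bush cost c(z) = 1 if z 0 = true, and c(z) = (number of indices i ∈ {1,…,n} with z i = true) if z 0 = false. Let C be the diagonal matrix with entry c(z) at z, let B' = ∑_{i : Fin (n+1)} X_i be the canonical mixer sum over all n+1 bits, let u be the uniform vector with entries 2^{-(n+1)/2}, and let ψ_f = (Matrix.exp (I·(π/4)·B') * Matrix.exp (-I·(π/2)·C)).mulVec u. Then |‖ψ_f 0‖² - 1/4| ≤ (2:ℝ)^(-(n:ℝ)/2), where 0 is the all-false string; in particular single-round QAOA with angles (π/4, π/2) solves the Bush of implications with success probability at least 1/4 − 2^{-n/2}. -/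

import Mathlib

open Matrix Complex

/-- The bit-flip (Pauli X on qubit `i`) matrix on `m`-bit strings. -/
noncomputable def pauliX (m : ℕ) (i : Fin m) :
    Matrix (Fin m → Bool) (Fin m → Bool) ℂ :=
  Matrix.of fun z z' => if z' = Function.update z i (!(z i)) then 1 else 0

/-- The Bush-of-implications cost on `n+1` bits: `1` if the central bit `z 0`
is set, and otherwise the Hamming weight of the `n` peripheral bits. -/
def bushCost (n : ℕ) (z : Fin (n + 1) → Bool) : ℕ :=
  if z 0 = true then 1
  else (Finset.univ.filter fun i : Fin (n + 1) => i ≠ 0 ∧ z i = true).card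

namespace QaoaAux

variable {m : ℕ}

/-- flip bit `i` -/
def bflip (i : Fin m) (z : Fin m → Bool) : Fin m → Bool := Function.update z i (!(z i))

lemma bflip_apply (i : Fin m) (z : Fin m → Bool) (k : Fin m) :
    bflip i z k = if k = i then !(z i) else z k := Function.update_apply ..

lemma bflip_bflip (i : Fin m) (z : Fin m → Bool) : bflip i (bflip i z) = z := by
  funext k
  by_cases h : k = i <;> simp [bflip_apply, h]

lemma bflip_comm (i j : Fin m) (z : Fin m → Bool) :
    bflip i (bflip j z) = bflip j (bflip i z) := by
  by_cases hij : i = j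
  · subst hij; rfl
  · funext k
    by_cases hki : k = i <;> by_cases hkj : k = j <;>
      simp_all [bflip_apply, hij, Ne.symm hij]

lemma eq_bflip_comm (i : Fin m) (z w : Fin m → Bool) :
    z = bflip i w ↔ w = bflip i z := by
  constructor <;> (rintro rfl; rw [bflip_bflip])

lemma pauliX_apply (i : Fin m) (z z' : Fin m → Bool) :
    pauliX m i z z' = if z' = bflip i z then 1 else 0 := rfl

lemma pauliX_mul (i : Fin m) (A : Matrix (Fin m → Bool) (Fin m → Bool) ℂ) :
    pauliX m i * A = Matrix.of fun z z' => A (bflip i z) z' := by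
  ext z z'
  simp only [Matrix.mul_apply, pauliX_apply, of_apply, ite_mul, one_mul, zero_mul]
  rw [Finset.sum_ite_eq' Finset.univ (bflip i z) (fun w => A w z')]
  simp

lemma mul_pauliX (i : Fin m) (A : Matrix (Fin m → Bool) (Fin m → Bool) ℂ) :
    A * pauliX m i = Matrix.of fun z z' => A z (bflip i z') := by
  ext z z'
  simp only [Matrix.mul_apply, pauliX_apply, of_apply]
  have : ∀ w, (if z' = bflip i w then (1:ℂ) else 0) = if w = bflip i z' then 1 else 0 := by
    intro w
    simp [eq_bflip_comm i z' w]
  simp only [this, mul_ite, mul_one, mul_zero]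
  rw [Finset.sum_ite_eq' Finset.univ (bflip i z') (fun w => A z w)]
  simp

lemma pauliX_sq (i : Fin m) : pauliX m i * pauliX m i = 1 := by
  ext z z'
  rw [pauliX_mul]
  simp only [of_apply, pauliX_apply, bflip_bflip, Matrix.one_apply]
  by_cases h : z' = z
  · simp [h]
  · rw [if_neg h, if_neg (fun hh => h hh.symm)]

lemma pauliX_commute (i j : Fin m) : Commute (pauliX m i) (pauliX m j) := by
  unfold Commute SemiconjBy
  rw [pauliX_mul, pauliX_mul]
  ext z z'
  simp [pauliX_apply, bflip_comm]


section Involution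

variable {ι : Type*} [Fintype ι] [DecidableEq ι]

/-- The ring hom `ℂ × ℂ →+* Matrix` sending `(a,b)` to `((a+b)/2)•1 + ((a-b)/2)•A`
when `A` is an involution. -/
noncomputable def invoHom (A : Matrix ι ι ℂ) (hA : A * A = 1) : ℂ × ℂ →+* Matrix ι ι ℂ where
  toFun p := ((p.1 + p.2) / 2) • (1 : Matrix ι ι ℂ) + ((p.1 - p.2) / 2) • A
  map_one' := by
    norm_num
  map_mul' p q := by
    have key : ∀ a b : ℂ × ℂ,
        (((a.1 * b.1 + a.2 * b.2) / 2) • (1 : Matrix ι ι ℂ)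
          + ((a.1 * b.1 - a.2 * b.2) / 2) • A) =
        (((a.1 + a.2) / 2) • (1 : Matrix ι ι ℂ) + ((a.1 - a.2) / 2) • A) *
          (((b.1 + b.2) / 2) • (1 : Matrix ι ι ℂ) + ((b.1 - b.2) / 2) • A) := by
      intro a b
      rw [add_mul, mul_add, mul_add, smul_mul_smul_comm, smul_mul_smul_comm,
        smul_mul_smul_comm, smul_mul_smul_comm, hA]
      simp only [one_mul, mul_one]
      module
    exact key p q
  map_zero' := by norm_num
  map_add' p q := by
    show _ = _
    simp only [Prod.fst_add, Prod.snd_add]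
    module

lemma exp_smul_involution (A : Matrix ι ι ℂ) (hA : A * A = 1) (c : ℂ) :
    NormedSpace.exp (c • A) =
      ((Complex.exp c + Complex.exp (-c)) / 2) • (1 : Matrix ι ι ℂ)
        + ((Complex.exp c - Complex.exp (-c)) / 2) • A := by
  letI : SeminormedRing (Matrix ι ι ℂ) := Matrix.linftyOpSemiNormedRing
  letI : NormedRing (Matrix ι ι ℂ) := Matrix.linftyOpNormedRing
  letI : NormedAlgebra ℂ (Matrix ι ι ℂ) := Matrix.linftyOpNormedAlgebra
  have hcont : Continuous (invoHom A hA) := by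
    show Continuous fun p : ℂ × ℂ =>
      ((p.1 + p.2) / 2) • (1 : Matrix ι ι ℂ) + ((p.1 - p.2) / 2) • A
    fun_prop
  have h1 : c • A = invoHom A hA (c, -c) := by
    show c • A = ((c + -c) / 2) • (1 : Matrix ι ι ℂ) + ((c - -c) / 2) • A
    module
  have h2 : NormedSpace.exp ((c, -c) : ℂ × ℂ) = (Complex.exp c, Complex.exp (-c)) := by
    ext
    · rw [Prod.fst_exp]; simp [← Complex.exp_eq_exp_ℂ]
    · rw [Prod.snd_exp]; simp [← Complex.exp_eq_exp_ℂ]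
  rw [h1]
  erw [← NormedSpace.map_exp (invoHom A hA) hcont]
  rw [h2]
  rfl

end Involution


lemma exp_I_pi_div_four :
    Complex.exp (Complex.I * ((Real.pi : ℂ) / 4)) =
      ((Real.sqrt 2 / 2 : ℝ) : ℂ) + ((Real.sqrt 2 / 2 : ℝ) : ℂ) * Complex.I := by
  rw [mul_comm, show ((Real.pi : ℂ) / 4) = ((Real.pi / 4 : ℝ) : ℂ) by push_cast; ring,
    Complex.exp_mul_I, ← Complex.ofReal_cos, ← Complex.ofReal_sin,
    Real.cos_pi_div_four, Real.sin_pi_div_four]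

lemma exp_neg_I_pi_div_four :
    Complex.exp (-(Complex.I * ((Real.pi : ℂ) / 4))) =
      ((Real.sqrt 2 / 2 : ℝ) : ℂ) - ((Real.sqrt 2 / 2 : ℝ) : ℂ) * Complex.I := by
  rw [show -(Complex.I * ((Real.pi : ℂ) / 4)) = ((-(Real.pi / 4) : ℝ) : ℂ) * Complex.I by
    push_cast; ring, Complex.exp_mul_I, ← Complex.ofReal_cos, ← Complex.ofReal_sin,
    Real.cos_neg, Real.sin_neg, Real.cos_pi_div_four, Real.sin_pi_div_four]
  push_cast
  ring

lemma exp_pauliX (i : Fin m) :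
    NormedSpace.exp ((Complex.I * ((Real.pi : ℂ) / 4)) • pauliX m i) =
      ((Real.sqrt 2 / 2 : ℝ) : ℂ) • (1 + Complex.I • pauliX m i) := by
  rw [exp_smul_involution (pauliX m i) (pauliX_sq i), exp_I_pi_div_four, exp_neg_I_pi_div_four]
  match_scalars <;> ring


open Finset in
open scoped Classical in
noncomputable def G (s : Finset (Fin m)) : Matrix (Fin m → Bool) (Fin m → Bool) ℂ :=
  Matrix.of fun z z' =>
    if ∀ i ∉ s, z i = z' i then Complex.I ^ (s.filter fun i => z i ≠ z' i).card else 0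

lemma G_empty : (G (∅ : Finset (Fin m))) = 1 := by
  ext z z'
  simp only [G, of_apply, Finset.notMem_empty, Finset.filter_empty, Finset.card_empty,
    pow_zero, Matrix.one_apply]
  by_cases h : z = z'
  · subst h; simp
  · rw [if_neg, if_neg h]
    intro hP
    exact h (funext fun i => hP i (by simp))

lemma one_add_mul_G (j : Fin m) (s : Finset (Fin m)) (hj : j ∉ s) :
    (1 + Complex.I • pauliX m j) * G s = G (insert j s) := by
  classical
  have hentry : ∀ z z', ((1 + Complex.I • pauliX m j) * G s) z z'
      = G s z z' + Complex.I * G s (bflip j z) z' := by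
    intro z z'
    rw [add_mul, one_mul, smul_mul_assoc, pauliX_mul, Matrix.add_apply, Matrix.smul_apply,
      of_apply]
    rfl
  ext z z'
  by_cases hzz : z j = z' j
  · have h2 : G s (bflip j z) z' = 0 := by
      rw [G, of_apply, if_neg]
      intro hP
      have hh := hP j hj
      rw [bflip_apply, if_pos rfl, hzz] at hh
      simp at hh
    have hcond : (∀ i ∉ insert j s, z i = z' i) ↔ (∀ i ∉ s, z i = z' i) := by
      constructor
      · intro h i hi
        by_cases hij : i = j
        · subst hij; exact hzz
        · exact h i (by simp [Finset.mem_insert, hij, hi])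
      · intro h i hi
        exact h i (fun hs => hi (Finset.mem_insert_of_mem hs))
    have hfil : ((insert j s).filter fun i => z i ≠ z' i) = s.filter fun i => z i ≠ z' i := by
      rw [Finset.filter_insert, if_neg (by simpa using hzz)]
    rw [hentry, h2, mul_zero, add_zero]
    simp only [G, of_apply, hfil]
    by_cases hc : ∀ i ∉ s, z i = z' i
    · rw [if_pos hc, if_pos (hcond.mpr hc)]
    · rw [if_neg hc, if_neg (fun h => hc (hcond.mp h))]
  · have h1 : G s z z' = 0 := by
      rw [G, of_apply, if_neg]
      intro hP
      exact hzz (hP j hj)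
    have hflipj : bflip j z j = z' j := by
      rw [bflip_apply, if_pos rfl]
      revert hzz
      cases z j <;> cases z' j <;> simp
    have hcond2 : (∀ i ∉ s, bflip j z i = z' i) ↔ (∀ i ∉ insert j s, z i = z' i) := by
      constructor
      · intro h i hi
        have hij : i ≠ j := fun e => hi (e ▸ Finset.mem_insert_self j s)
        have his : i ∉ s := fun e => hi (Finset.mem_insert_of_mem e)
        have hh := h i his
        rwa [bflip_apply, if_neg hij] at hh
      · intro h i hi
        by_cases hij : i = j
        · subst hij; exact hflipj
        · rw [bflip_apply, if_neg hij]
          exact h i (by simp [Finset.mem_insert, hij, hi])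
    have hfil2 : (s.filter fun i => bflip j z i ≠ z' i) = s.filter fun i => z i ≠ z' i := by
      apply Finset.filter_congr
      intro i hi
      have hij : i ≠ j := fun e => hj (e ▸ hi)
      simp [bflip_apply, hij]
    have hfil3 : ((insert j s).filter fun i => z i ≠ z' i).card
        = (s.filter fun i => z i ≠ z' i).card + 1 := by
      rw [Finset.filter_insert, if_pos hzz,
        Finset.card_insert_of_notMem (fun h => hj (Finset.mem_filter.mp h).1)]
    rw [hentry, h1, zero_add]
    simp only [G, of_apply, hfil2, hfil3]
    by_cases hc : ∀ i ∉ insert j s, z i = z' i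
    · rw [if_pos (hcond2.mpr hc), if_pos hc, pow_succ]
      ring
    · rw [if_neg (fun h => hc (hcond2.mp h)), if_neg hc, mul_zero]

open scoped Function in
lemma noncommProd_exp :
    ∀ (s : Finset (Fin m)) (h : (↑s : Set (Fin m)).Pairwise
        (Commute on fun i => NormedSpace.exp ((Complex.I * ((Real.pi : ℂ) / 4)) • pauliX m i))),
      s.noncommProd (fun i => NormedSpace.exp ((Complex.I * ((Real.pi : ℂ) / 4)) • pauliX m i)) h
        = (((Real.sqrt 2 / 2 : ℝ) : ℂ)) ^ s.card • G s := by
  intro s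
  induction s using Finset.induction_on with
  | empty => intro h; simp [G_empty]
  | @insert j s hj ih =>
    intro h
    rw [Finset.noncommProd_insert_of_notMem _ _ _ _ hj, ih _, exp_pauliX,
      smul_mul_smul_comm, one_add_mul_G j s hj, Finset.card_insert_of_notMem hj, pow_succ,
      mul_comm]


lemma exp_smul_sum_pauliX :
    NormedSpace.exp ((Complex.I * ((Real.pi : ℂ) / 4)) • ∑ i : Fin m, pauliX m i)
      = (((Real.sqrt 2 / 2 : ℝ) : ℂ)) ^ m • G (Finset.univ : Finset (Fin m)) := by
  rw [Finset.smul_sum, Matrix.exp_sum_of_commute Finset.univ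
      (fun i => (Complex.I * ((Real.pi : ℂ) / 4)) • pauliX m i)
      (fun i _ j _ _ => ((pauliX_commute i j).smul_left _).smul_right _)]
  exact (noncommProd_exp Finset.univ _).trans (by rw [Finset.card_univ, Fintype.card_fin])

lemma exp_neg_I_pi_div_two : Complex.exp (-Complex.I * ((Real.pi : ℂ) / 2)) = -Complex.I := by
  rw [show -Complex.I * ((Real.pi : ℂ) / 2) = ((-(Real.pi / 2) : ℝ) : ℂ) * Complex.I by
    push_cast; ring, Complex.exp_mul_I, ← Complex.ofReal_cos, ← Complex.ofReal_sin,
    Real.cos_neg, Real.sin_neg, Real.cos_pi_div_two, Real.sin_pi_div_two]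
  push_cast
  ring

/-- Hamming weight. -/
def W (z : Fin m → Bool) : ℕ := (Finset.univ.filter fun i => z i = true).card

lemma W_cons (n : ℕ) (b : Bool) (y : Fin n → Bool) :
    W (Fin.cons b y) = (if b then 1 else 0) + W y := by
  classical
  simp only [W, Finset.card_filter]
  rw [Fin.sum_univ_succ]
  simp [Fin.cons_zero, Fin.cons_succ]


lemma bushCost_cons (n : ℕ) (b : Bool) (y : Fin n → Bool) :
    bushCost n (Fin.cons b y) = if b then 1 else W y := by
  unfold bushCost
  rw [Fin.cons_zero]
  cases b
  · simp only [Bool.false_eq_true, if_false]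
    rw [show W y = ∑ i : Fin n, if y i = true then 1 else 0 from Finset.card_filter _ _]
    simp only [Finset.card_filter]
    rw [Fin.sum_univ_succ]
    simp [Fin.succ_ne_zero, Fin.cons_succ]
  · simp

lemma sum_I_pow_W (n : ℕ) :
    ∑ y : Fin n → Bool, Complex.I ^ W y = (1 + Complex.I) ^ n := by
  classical
  have h1 : ∀ y : Fin n → Bool, Complex.I ^ W y = ∏ i, (if y i then Complex.I else 1) := by
    intro y
    rw [W, Finset.card_filter, ← Finset.prod_pow_eq_pow_sum]
    refine Finset.prod_congr rfl fun i _ => ?_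
    by_cases h : y i = true <;> simp [h]
  simp only [h1]
  have h2 := Finset.sum_prod_piFinset (Finset.univ : Finset Bool)
    (fun (_ : Fin n) (b : Bool) => if b then Complex.I else 1)
  rw [Fintype.piFinset_univ] at h2
  rw [h2]
  simp [add_comm]

lemma big_sum (n : ℕ) :
    ∑ z : Fin (n + 1) → Bool, Complex.I ^ W z * (-Complex.I) ^ bushCost n z
      = (2 : ℂ) ^ n + (1 + Complex.I) ^ n := by
  classical
  rw [← Equiv.sum_comp (Fin.consEquiv fun _ : Fin (n + 1) => Bool)
    (fun z => Complex.I ^ W z * (-Complex.I) ^ bushCost n z)]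
  rw [Fintype.sum_prod_type]
  simp only [Fin.consEquiv, Equiv.coe_fn_mk, W_cons, bushCost_cons]
  rw [Fintype.sum_bool]
  norm_num
  have htrue : ∀ y : Fin n → Bool,
      Complex.I ^ (1 + W y) * Complex.I = -(Complex.I ^ W y) := by
    intro y
    rw [pow_add, pow_one]
    ring_nf
    rw [Complex.I_sq]
    ring
  have hfalse : ∀ y : Fin n → Bool,
      Complex.I ^ W y * (-Complex.I) ^ W y = 1 := by
    intro y
    rw [← mul_pow]
    simp [Complex.I_mul_I]
  simp only [htrue, hfalse, Finset.sum_neg_distrib, neg_neg]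
  rw [sum_I_pow_W, Finset.sum_const, Finset.card_univ]
  simp [Fintype.card_fun, add_comm]

lemma G_univ_row (z : Fin m → Bool) :
    G (Finset.univ : Finset (Fin m)) (fun _ => false) z = Complex.I ^ W z := by
  classical
  rw [G, of_apply, if_pos (by simp)]
  congr 1
  unfold W
  apply congrArg Finset.card
  apply Finset.filter_congr
  intro i _
  cases h : z i <;> simp [h]

end QaoaAux

open QaoaAux


set_option maxHeartbeats 2000000 in
/-- Single-round QAOA with angles `(π/4, π/2)` solves the Bush of implications
with success probability `1/4 + O(2^{-n/2})`. -/
theorem qaoa1_bush_success (n : ℕ) (hn : 1 ≤ n)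
    (B' C : Matrix (Fin (n + 1) → Bool) (Fin (n + 1) → Bool) ℂ)
    (hB' : B' = ∑ i, pauliX (n + 1) i)
    (hC : C = Matrix.diagonal fun z => (bushCost n z : ℂ))
    (u : (Fin (n + 1) → Bool) → ℂ)
    (hu : u = fun _ => (((2 : ℝ) ^ (-((n : ℝ) + 1) / 2) : ℝ) : ℂ))
    (ψf : (Fin (n + 1) → Bool) → ℂ)
    (hψf : ψf = (NormedSpace.exp ((Complex.I * ((Real.pi : ℂ) / 4)) • B') *
        NormedSpace.exp ((-Complex.I * ((Real.pi : ℂ) / 2)) • C)).mulVec u) :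
    |‖ψf (fun _ => false)‖ ^ 2 - 1 / 4| ≤ (2 : ℝ) ^ (-(n : ℝ) / 2) := by
  classical
  set q : ℂ := ((Real.sqrt 2 / 2 : ℝ) : ℂ) with hq
  set u0 : ℝ := (2 : ℝ) ^ (-((n : ℝ) + 1) / 2) with hu0
  -- exponential of the mixer
  have hE : NormedSpace.exp ((Complex.I * ((Real.pi : ℂ) / 4)) • B')
      = q ^ (n + 1) • G (Finset.univ : Finset (Fin (n + 1))) := by
    rw [hB', exp_smul_sum_pauliX]
  -- exponential of the cost
  have hD : NormedSpace.exp ((-Complex.I * ((Real.pi : ℂ) / 2)) • C)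
      = Matrix.diagonal fun z => (-Complex.I) ^ bushCost n z := by
    rw [hC, ← Matrix.diagonal_smul, Matrix.exp_diagonal]
    have harg : (NormedSpace.exp ((-Complex.I * ((Real.pi : ℂ) / 2))
        • fun z : Fin (n+1) → Bool => (bushCost n z : ℂ)))
        = fun z => (-Complex.I) ^ bushCost n z := by
      funext z
      rw [Pi.coe_exp, Pi.smul_apply, smul_eq_mul, ← Complex.exp_eq_exp_ℂ,
        mul_comm, Complex.exp_nat_mul, exp_neg_I_pi_div_two]
    rw [harg]
  -- the amplitude at the all-zero string
  have hval : ψf (fun _ => false)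
      = (q ^ (n + 1) * (u0 : ℂ)) * ((2 : ℂ) ^ n + (1 + Complex.I) ^ n) := by
    rw [hψf, hE, hD, hu]
    rw [Matrix.smul_mul, Matrix.smul_mulVec]
    rw [Pi.smul_apply, smul_eq_mul]
    simp only [Matrix.mulVec, dotProduct, Matrix.mul_diagonal, G_univ_row]
    rw [← Finset.sum_mul, ← big_sum n]
    ring
  rw [hval]
  -- norms
  have hq0 : (0 : ℝ) < Real.sqrt 2 / 2 := by positivity
  have hnq : ‖q ^ (n + 1) * (u0 : ℂ)‖ = (Real.sqrt 2 / 2) ^ (n + 1) * u0 := by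
    rw [norm_mul, norm_pow, hq, Complex.norm_real, Complex.norm_real,
      Real.norm_of_nonneg hq0.le, Real.norm_of_nonneg (by positivity)]
  set r : ℝ := (Real.sqrt 2 / 2) ^ (n + 1) * u0 with hrdef
  have h2pos : (0:ℝ) < 2 := two_pos
  have hhalf : Real.sqrt 2 / 2 = (2 : ℝ) ^ (-(1 : ℝ) / 2) := by
    rw [Real.sqrt_eq_rpow, show (-(1:ℝ)/2) = 1/2 + (-1) by ring, Real.rpow_add h2pos,
      Real.rpow_neg_one]
    ring
  have hr : r = (2 : ℝ) ^ (-((n : ℝ) + 1)) := by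
    rw [hrdef, hu0, hhalf, ← Real.rpow_natCast ((2:ℝ) ^ (-(1:ℝ)/2)) (n+1),
      ← Real.rpow_mul h2pos.le, ← Real.rpow_add h2pos]
    congr 1
    push_cast
    ring
  have hrpos : (0:ℝ) < r := by rw [hr]; positivity
  -- norm of the big factor
  have hnormI : ‖1 + Complex.I‖ = Real.sqrt 2 := by
    rw [Complex.norm_def, Complex.normSq_apply]
    norm_num
  have hBn : ‖(1 + Complex.I) ^ n‖ = (2 : ℝ) ^ ((n : ℝ) / 2) := by
    rw [norm_pow, hnormI, Real.sqrt_eq_rpow, ← Real.rpow_natCast ((2:ℝ) ^ ((1:ℝ)/2)) n,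
      ← Real.rpow_mul h2pos.le]
    congr 1
    ring
  set Bn : ℝ := (2 : ℝ) ^ ((n : ℝ) / 2) with hBndef
  set A : ℝ := (2 : ℝ) ^ (n : ℕ) with hAdef
  have hA : ‖((2:ℂ)) ^ n‖ = A := by
    rw [norm_pow]
    norm_num
    exact hAdef.symm
  set N : ℝ := ‖(2 : ℂ) ^ n + (1 + Complex.I) ^ n‖ with hNdef
  have htri : |N - A| ≤ Bn := by
    have := abs_norm_sub_norm_le ((2:ℂ)^n + (1 + Complex.I)^n) ((2:ℂ)^n)
    rwa [add_sub_cancel_left, hA, hBn] at this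
  have hnorm : ‖q ^ (n + 1) * (u0 : ℂ) * ((2:ℂ) ^ n + (1 + Complex.I) ^ n)‖ = r * N := by
    rw [norm_mul, hnq]
  rw [hnorm]
  -- numeric facts
  have hApow : A = (2:ℝ) ^ ((n:ℕ) : ℝ) := (Real.rpow_natCast 2 n).symm
  have hrA : r * A = 1 / 2 := by
    rw [hr, hApow, ← Real.rpow_add h2pos, show -(((n:ℝ)) + 1) + (n:ℝ) = -1 by ring,
      Real.rpow_neg_one]
    norm_num
  set t : ℝ := r * Bn with htdef
  have ht : t = (2:ℝ) ^ (-(n:ℝ)/2 - 1) := by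
    rw [htdef, hr, hBndef, ← Real.rpow_add h2pos]
    congr 1
    ring
  have htpos : (0:ℝ) < t := by rw [ht]; positivity
  have hthalf : t ≤ 1 / 2 := by
    rw [ht, show (1:ℝ)/2 = (2:ℝ) ^ (-(1:ℝ)) by rw [Real.rpow_neg_one]; norm_num]
    apply Real.rpow_le_rpow_of_exponent_le one_le_two
    have : (0:ℝ) ≤ (n:ℝ) := Nat.cast_nonneg n
    linarith
  have hgoal : (2:ℝ) ^ (-(n:ℝ)/2) = 2 * t := by
    rw [ht, show (2:ℝ) * (2:ℝ) ^ (-(n:ℝ)/2 - 1) = (2:ℝ) ^ (1:ℝ) * (2:ℝ) ^ (-(n:ℝ)/2 - 1)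
      by rw [Real.rpow_one], ← Real.rpow_add h2pos]
    congr 1
    ring
  rw [hgoal]
  have hNA1 : N - A ≤ Bn := (abs_le.mp htri).2
  have hNA2 : -Bn ≤ N - A := (abs_le.mp htri).1
  have hNnn : (0:ℝ) ≤ N := norm_nonneg _
  have hBnpos : (0:ℝ) < Bn := by rw [hBndef]; positivity
  have hup : r * N ≤ 1/2 + t := by nlinarith
  have hlo : 1/2 - t ≤ r * N := by nlinarith
  have hrNnn : (0:ℝ) ≤ r * N := by positivity
  clear_value q u0 r Bn A N t
  clear hval hψf hu hC hB' hE hD hq hu0 hrdef hnq hhalf hr hnormI hBn hBndef hAdef hA hNdef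
    htri hnorm hApow ht hgoal
  have ht2 : t ^ 2 ≤ t := by nlinarith
  have h1 : (r * N) ^ 2 ≤ (1 / 2 + t) ^ 2 := by nlinarith
  have h2 : (1 / 2 - t) ^ 2 ≤ (r * N) ^ 2 := by nlinarith
  rw [abs_le]
  constructor
  · nlinarith
  · nlinarith
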